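/- If f: ℝⁿ → (0,∞) is bounded below by m > 0 and satisfies D²f ≤ C·Id (as quadratic forms), then f_t = P_t f satisfies D²(−log f_t) ≥ −(C e^{−2t}/m)·Id for every t ≥ 0; i.e., f_t is −(C e^{−2t}/m)-log-concave. -/

import Mathlib

open MeasureTheory

/-- The standard Gaussian measure on ℝⁿ. -/
noncomputable def stdGaussian (n : ℕ) : Measure (EuclideanSpace ℝ (Fin n)) :=
  volume.withDensity
    (fun x => ENNReal.ofReal ((2 * Real.pi) ^ (-(n : ℝ) / 2) * Real.exp (-‖x‖ ^ 2 / 2)))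

/-- The Ornstein–Uhlenbeck semigroup: `P t f x = E[f(e^{-t} x + √(1-e^{-2t}) Z)]`. -/
noncomputable def ouSemigroup (n : ℕ) (t : ℝ) (f : EuclideanSpace ℝ (Fin n) → ℝ)
    (x : EuclideanSpace ℝ (Fin n)) : ℝ :=
  ∫ z, f (Real.exp (-t) • x + Real.sqrt (1 - Real.exp (-2 * t)) • z) ∂(stdGaussian n)

open Real

local notation "⟪" x ", " y "⟫" => @inner ℝ _ _ x y

set_option linter.unusedSectionVars false

lemma integrable_exp_quarter (n : ℕ) :
    Integrable (fun v : EuclideanSpace ℝ (Fin n) => Real.exp (-(4:ℝ)⁻¹ * ‖v‖ ^ 2)) := by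
  have h := (GaussianFourier.integrable_cexp_neg_mul_sq_norm_add
    (V := EuclideanSpace ℝ (Fin n)) (b := ((4:ℝ)⁻¹ : ℂ)) (by norm_num) 0 0).norm
  refine h.congr (Filter.Eventually.of_forall fun v => ?_)
  simp [Complex.norm_exp]
  norm_cast

lemma gauss_density_cont (n : ℕ) :
    Continuous (fun x : EuclideanSpace ℝ (Fin n) =>
      (2 * Real.pi) ^ (-(n : ℝ) / 2) * Real.exp (-‖x‖ ^ 2 / 2)) := by
  fun_prop

lemma gauss_density_meas (n : ℕ) :
    Measurable (fun x : EuclideanSpace ℝ (Fin n) =>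
      ENNReal.ofReal ((2 * Real.pi) ^ (-(n : ℝ) / 2) * Real.exp (-‖x‖ ^ 2 / 2))) :=
  (gauss_density_cont n).measurable.ennreal_ofReal

lemma integrable_gauss_density (n : ℕ) :
    Integrable (fun x : EuclideanSpace ℝ (Fin n) =>
      (2 * Real.pi) ^ (-(n : ℝ) / 2) * Real.exp (-‖x‖ ^ 2 / 2)) := by
  refine Integrable.const_mul ?_ _
  have : ∀ x : EuclideanSpace ℝ (Fin n), Real.exp (-‖x‖ ^ 2 / 2)
      = Real.exp (-(2:ℝ)⁻¹ * ‖x‖ ^ 2) := by intro x; ring_nf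
  simp_rw [this]
  have h := (GaussianFourier.integrable_cexp_neg_mul_sq_norm_add
    (V := EuclideanSpace ℝ (Fin n)) (b := ((2:ℝ)⁻¹ : ℂ)) (by norm_num) 0 0).norm
  refine h.congr (Filter.Eventually.of_forall fun v => ?_)
  simp [Complex.norm_exp]
  norm_cast

lemma stdGaussian_univ (n : ℕ) : stdGaussian n Set.univ = 1 := by
  rw [stdGaussian, withDensity_apply _ MeasurableSet.univ, Measure.restrict_univ]
  rw [← ofReal_integral_eq_lintegral_ofReal (integrable_gauss_density n)
    (Filter.Eventually.of_forall fun x => by positivity)]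
  rw [integral_const_mul]
  have : ∀ x : EuclideanSpace ℝ (Fin n), Real.exp (-‖x‖ ^ 2 / 2)
      = Real.exp (-(2:ℝ)⁻¹ * ‖x‖ ^ 2) := by intro x; ring_nf
  simp_rw [this, GaussianFourier.integral_rexp_neg_mul_sq_norm (by norm_num : (0:ℝ) < 2⁻¹)]
  rw [finrank_euclideanSpace_fin]
  have h2 : (Real.pi / 2⁻¹ : ℝ) = 2 * Real.pi := by field_simp
  rw [h2, ← Real.rpow_add (by positivity)]
  norm_num
  have h3 : (-(n:ℝ) / 2 + (n:ℝ) / 2) = 0 := by ring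
  rw [h3, Real.rpow_zero]

instance stdGaussian_prob (n : ℕ) : IsProbabilityMeasure (stdGaussian n) :=
  ⟨stdGaussian_univ n⟩

lemma gauss_density_cont' (n : ℕ) :
    Continuous (fun x : EuclideanSpace ℝ (Fin n) =>
      (2 * Real.pi) ^ (-(n : ℝ) / 2) * Real.exp (-‖x‖ ^ 2 / 2)) := by fun_prop

lemma integrable_of_quad_bound {n : ℕ} {g : EuclideanSpace ℝ (Fin n) → ℝ}
    (hg : Continuous g) (a b : ℝ) (h : ∀ z, |g z| ≤ a + b * ‖z‖ ^ 2) :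
    Integrable g (stdGaussian n) := by
  rw [stdGaussian, integrable_withDensity_iff (gauss_density_meas n)
    (Filter.Eventually.of_forall fun x => ENNReal.ofReal_lt_top)]
  have hρ : ∀ x : EuclideanSpace ℝ (Fin n),
      (ENNReal.ofReal ((2 * Real.pi) ^ (-(n : ℝ) / 2) * Real.exp (-‖x‖ ^ 2 / 2))).toReal
      = (2 * Real.pi) ^ (-(n : ℝ) / 2) * Real.exp (-‖x‖ ^ 2 / 2) := fun x =>
    ENNReal.toReal_ofReal (by positivity)
  simp_rw [hρ]
  refine Integrable.mono' ((integrable_exp_quarter n).const_mul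
    ((|a| + 4 * |b|) * (2 * Real.pi) ^ (-(n : ℝ) / 2)))
    (hg.mul (gauss_density_cont' n)).aestronglyMeasurable
    (Filter.Eventually.of_forall fun z => ?_)
  set s := ‖z‖ ^ 2 with hs
  have hs0 : 0 ≤ s := by positivity
  have hkey : (a + b * s) * Real.exp (-s / 2) ≤ (|a| + 4 * |b|) * Real.exp (-(4:ℝ)⁻¹ * s) := by
    have e1 : Real.exp (-s / 2) = Real.exp (-(4:ℝ)⁻¹ * s) * Real.exp (-(4:ℝ)⁻¹ * s) := by
      rw [← Real.exp_add]; ring_nf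
    have e2 : Real.exp (-(4:ℝ)⁻¹ * s) ≤ 1 := Real.exp_le_one_iff.2 (by nlinarith)
    have e3 : s * Real.exp (-(4:ℝ)⁻¹ * s) ≤ 4 := by
      have h4 : s / 4 ≤ Real.exp (s / 4) := by
        nlinarith [Real.add_one_le_exp (s / 4)]
      have h5 : Real.exp (-(4:ℝ)⁻¹ * s) = (Real.exp (s / 4))⁻¹ := by
        rw [← Real.exp_neg]; ring_nf
      rw [h5]
      have h6 : s ≤ 4 * Real.exp (s / 4) := by linarith
      calc s * (Real.exp (s / 4))⁻¹ ≤ 4 * Real.exp (s / 4) * (Real.exp (s / 4))⁻¹ :=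
            mul_le_mul_of_nonneg_right h6 (inv_nonneg.2 (Real.exp_pos _).le)
        _ = 4 := by field_simp
    have epos : 0 < Real.exp (-(4:ℝ)⁻¹ * s) := Real.exp_pos _
    have ha : a ≤ |a| := le_abs_self a
    have hb : b ≤ |b| := le_abs_self b
    have hb0 : 0 ≤ |b| := abs_nonneg b
    have ha0 : 0 ≤ |a| := abs_nonneg a
    rw [e1]
    have h7 : a * Real.exp (-(4:ℝ)⁻¹ * s) ≤ |a| := by nlinarith
    have h8 : b * (s * Real.exp (-(4:ℝ)⁻¹ * s)) ≤ |b| * 4 := by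
      have : b * (s * Real.exp (-(4:ℝ)⁻¹ * s)) ≤ |b| * (s * Real.exp (-(4:ℝ)⁻¹ * s)) :=
        mul_le_mul_of_nonneg_right hb (mul_nonneg hs0 epos.le)
      nlinarith [mul_le_mul_of_nonneg_left e3 hb0]
    have : (a + b * s) * Real.exp (-(4:ℝ)⁻¹ * s) ≤ |a| + 4 * |b| := by nlinarith
    nlinarith
  have hρpos : (0:ℝ) < (2 * Real.pi) ^ (-(n : ℝ) / 2) := by positivity
  have := h z
  rw [Real.norm_eq_abs, abs_mul, abs_of_pos (by positivity :
    (0:ℝ) < (2 * Real.pi) ^ (-(n : ℝ) / 2) * Real.exp (-‖z‖ ^ 2 / 2))]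
  calc |g z| * ((2 * Real.pi) ^ (-(n : ℝ) / 2) * Real.exp (-‖z‖ ^ 2 / 2))
      ≤ (a + b * s) * ((2 * Real.pi) ^ (-(n : ℝ) / 2) * Real.exp (-s / 2)) := by
        apply mul_le_mul (h z) (le_refl _) (by positivity) ?_
        · nlinarith [h z, abs_nonneg (g z)]
    _ = (a + b * s) * Real.exp (-s / 2) * (2 * Real.pi) ^ (-(n : ℝ) / 2) := by ring
    _ ≤ (|a| + 4 * |b|) * Real.exp (-(4:ℝ)⁻¹ * s) * (2 * Real.pi) ^ (-(n : ℝ) / 2) := by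
        exact mul_le_mul_of_nonneg_right hkey hρpos.le
    _ = (|a| + 4 * |b|) * (2 * Real.pi) ^ (-(n : ℝ) / 2) * Real.exp (-(4:ℝ)⁻¹ * ‖z‖ ^ 2) := by
        rw [hs]; ring

section
variable {n : ℕ} {f : EuclideanSpace ℝ (Fin n) → ℝ} {C m : ℝ}

lemma grad_inner (hf : ContDiff ℝ 2 f) (x v : EuclideanSpace ℝ (Fin n)) :
    ⟪gradient f x, v⟫ = fderiv ℝ f x v := by
  have h : HasGradientAt f (gradient f x) x :=
    ((hf.differentiable two_ne_zero) x).hasGradientAt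
  rw [hasGradientAt_iff_hasFDerivAt] at h
  rw [h.fderiv]
  simp [InnerProductSpace.toDual_apply_apply]

lemma grad_diff (hf : ContDiff ℝ 2 f) : Differentiable ℝ (gradient f) := by
  have h1 : ContDiff ℝ 1 (fderiv ℝ f) := by
    have := hf.fderiv_right (m := 1) (by norm_num)
    exact this
  have : gradient f = fun x => (InnerProductSpace.toDual ℝ _).symm (fderiv ℝ f x) := rfl
  rw [this]
  exact fun x => ((InnerProductSpace.toDual ℝ _).symm.toContinuousLinearEquiv.differentiableAt).comp x
    (h1.differentiable one_ne_zero x)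

/-- Taylor upper bound from the Hessian bound. -/
lemma taylor_ub (hf : ContDiff ℝ 2 f) {C : ℝ}
    (hhess : ∀ x v, ⟪v, fderiv ℝ (gradient f) x v⟫ ≤ C * ‖v‖ ^ 2)
    (p u : EuclideanSpace ℝ (Fin n)) :
    f (p + u) ≤ f p + ⟪gradient f p, u⟫ + C * ‖u‖ ^ 2 / 2 := by
  have hfd : Differentiable ℝ f := hf.differentiable two_ne_zero
  have hgd := grad_diff hf
  -- the curve
  have hc : ∀ s : ℝ, HasDerivAt (fun s : ℝ => p + s • u) u s := by
    intro s
    simpa using ((hasDerivAt_id s).smul_const u).const_add p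
  set g : ℝ → ℝ := fun s => ⟪gradient f (p + s • u), u⟫ with hg
  have hder : ∀ s : ℝ, HasDerivAt (fun s => f (p + s • u)) (g s) s := by
    intro s
    have h1 : HasFDerivAt f (fderiv ℝ f (p + s • u)) (p + s • u) :=
      (hfd _).hasFDerivAt
    have := h1.comp_hasDerivAt s (hc s)
    have e : g s = fderiv ℝ f (p + s • u) u := grad_inner hf _ _
    rw [e]; exact this
  have hder2 : ∀ s : ℝ, HasDerivAt g ⟪fderiv ℝ (gradient f) (p + s • u) u, u⟫ s := by
    intro s
    have h1 : HasFDerivAt (gradient f) (fderiv ℝ (gradient f) (p + s • u)) (p + s • u) :=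
      (hgd _).hasFDerivAt
    have h2 := h1.comp_hasDerivAt s (hc s)
    have h3 := HasDerivAt.inner ℝ h2 (hasDerivAt_const s u)
    have e : ⟪fderiv ℝ (gradient f) (p + s • u) u, u⟫ = ⟪(gradient f ∘ fun s => p + s • u) s, 0⟫
        + ⟪fderiv ℝ (gradient f) (p + s • u) u, u⟫ := by simp
    rw [e]; exact h3
  -- q and its derivative
  set q : ℝ → ℝ := fun s => f (p + s • u) - s * g 0 - C * ‖u‖ ^ 2 / 2 * s ^ 2 with hqdef
  have hq : ∀ s : ℝ, HasDerivAt q (g s - g 0 - C * ‖u‖ ^ 2 * s) s := by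
    intro s
    have hlin : HasDerivAt (fun s : ℝ => s * g 0) (g 0) s := by
      simpa using (hasDerivAt_id' (x := s)).mul_const (g 0)
    have hquad : HasDerivAt (fun s : ℝ => C * ‖u‖ ^ 2 / 2 * s ^ 2) (C * ‖u‖ ^ 2 * s) s := by
      have := (hasDerivAt_pow 2 s).const_mul (C * ‖u‖ ^ 2 / 2)
      rw [show C * ‖u‖ ^ 2 * s = C * ‖u‖ ^ 2 / 2 * (((2:ℕ):ℝ) * s ^ (2 - 1)) by norm_num; ring]
      exact this
    exact ((hder s).sub hlin).sub hquad
  set q' : ℝ → ℝ := fun s => g s - g 0 - C * ‖u‖ ^ 2 * s with hq'def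
  have hq'der : ∀ s : ℝ, HasDerivAt q' (⟪fderiv ℝ (gradient f) (p + s • u) u, u⟫ - C * ‖u‖ ^ 2) s := by
    intro s
    have hlin : HasDerivAt (fun s : ℝ => C * ‖u‖ ^ 2 * s) (C * ‖u‖ ^ 2) s := by
      simpa using (hasDerivAt_id' (x := s)).const_mul (C * ‖u‖ ^ 2)
    exact ((hder2 s).sub_const (g 0)).sub hlin
  have hq'anti : Antitone q' := by
    apply antitone_of_deriv_nonpos
    · exact fun s => (hq'der s).differentiableAt
    · intro s
      rw [(hq'der s).deriv]
      have := hhess (p + s • u) u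
      rw [real_inner_comm] at this
      linarith
  have hq'0 : q' 0 = 0 := by simp [hq'def]
  have hqanti : AntitoneOn q (Set.Ici (0:ℝ)) := by
    apply antitoneOn_of_deriv_nonpos (convex_Ici 0)
    · exact (Differentiable.continuous
        (fun s => (hq s).differentiableAt)).continuousOn
    · exact fun s _ => (hq s).differentiableAt.differentiableWithinAt
    · intro s hs
      rw [(hq s).deriv]
      have : q' s ≤ 0 := hq'0 ▸ hq'anti (le_of_lt (by simpa using hs))
      simpa [hq'def] using this
  have := hqanti (Set.self_mem_Ici) (Set.mem_Ici.2 zero_le_one) zero_le_one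
  have hg0 : g 0 = ⟪gradient f p, u⟫ := by simp [hg]
  simp only [hqdef, one_smul, zero_smul, add_zero, one_pow, mul_zero, zero_mul,
    mul_one, sub_zero, one_mul] at this
  norm_num at this
  rw [hg0] at this
  linarith [this]

section
variable (htay : ∀ p u : EuclideanSpace ℝ (Fin n),
    f (p + u) ≤ f p + ⟪gradient f p, u⟫ + C * ‖u‖ ^ 2 / 2)
  (hm : 0 < m) (hlower : ∀ x, m ≤ f x)

include htay hm hlower

lemma C_nonneg (hn : 0 < n) : 0 ≤ C := by
  by_contra hC
  push_neg at hC
  set v : EuclideanSpace ℝ (Fin n) := EuclideanSpace.single ⟨0, hn⟩ (1:ℝ) with hv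
  have hnv : ‖v‖ = 1 := by simp [hv]
  set A : ℝ := f 0
  set B : ℝ := |⟪gradient f 0, v⟫|
  have hB : 0 ≤ B := abs_nonneg _
  set s : ℝ := max 1 ((B + (A - m) + 1) * 2 / (-C)) with hs
  have hs1 : 1 ≤ s := le_max_left _ _
  have hs2 : (B + (A - m) + 1) * 2 / (-C) ≤ s := le_max_right _ _
  have hAm : m ≤ A := hlower 0
  have h1 := htay 0 (s • v)
  rw [zero_add] at h1
  have h2 : m ≤ f (s • v) := hlower _
  have h3 : ⟪gradient f 0, s • v⟫ ≤ s * B := by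
    rw [real_inner_smul_right]
    have : ⟪gradient f 0, v⟫ ≤ B := le_abs_self _
    nlinarith
  have h4 : ‖s • v‖ ^ 2 = s ^ 2 := by
    rw [norm_smul, hnv]
    simp [abs_of_pos (lt_of_lt_of_le one_pos hs1)]
  rw [h4] at h1
  -- m ≤ A + s*B + C*s^2/2, with s chosen large
  have h5 : C * s ≤ -(B + (A - m) + 1) * 2 := by
    rw [div_le_iff₀ (by linarith : (0:ℝ) < -C)] at hs2
    nlinarith
  nlinarith [h1, h2, h3, hAm, hs1, hB]

lemma grad_bound (hC : 0 ≤ C) (p : EuclideanSpace ℝ (Fin n)) :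
    ‖gradient f p‖ ≤ f p - m + C / 2 := by
  by_cases h : gradient f p = 0
  · rw [h, norm_zero]
    have := hlower p
    linarith
  · set u : EuclideanSpace ℝ (Fin n) := -(‖gradient f p‖⁻¹ • gradient f p) with hu
    have hng : (0:ℝ) < ‖gradient f p‖ := norm_pos_iff.2 h
    have hnu : ‖u‖ = 1 := by
      rw [hu, norm_neg, norm_smul]
      simp [abs_of_pos (inv_pos.2 hng), inv_mul_cancel₀ (ne_of_gt hng)]
    have hip : ⟪gradient f p, u⟫ = -‖gradient f p‖ := by
      rw [hu, inner_neg_right, real_inner_smul_right, real_inner_self_eq_norm_sq]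
      field_simp
    have h1 := htay p u
    rw [hip, hnu] at h1
    have h2 := hlower (p + u)
    nlinarith
end

end

set_option maxHeartbeats 2000000 in
theorem stmt_10 (n : ℕ) (f : EuclideanSpace ℝ (Fin n) → ℝ)
    (hf : ContDiff ℝ 2 f) (m : ℝ) (hm : 0 < m) (hlower : ∀ x, m ≤ f x)
    (C : ℝ)
    (hhess : ∀ x v, inner ℝ v (fderiv ℝ (gradient f) x v) ≤ C * ‖v‖ ^ 2)
    (t : ℝ) (ht : 0 ≤ t) :
    ConcaveOn ℝ Set.univ
      (fun x => Real.log (ouSemigroup n t f x) -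
        (C * Real.exp (-2 * t) / m) * ‖x‖ ^ 2 / 2) := by
  rcases Nat.eq_zero_or_pos n with hn | hn
  · subst hn
    haveI : Subsingleton (EuclideanSpace ℝ (Fin 0)) := ⟨fun a b => PiLp.ext fun i => i.elim0⟩
    refine ⟨convex_univ, fun x _ y _ α β hα hβ hαβ => le_of_eq ?_⟩
    rw [Subsingleton.elim (α • x + β • y) x, Subsingleton.elim y x]
    simp only [smul_eq_mul, ← add_mul, hαβ, one_mul]
  -- main case
  have htay := taylor_ub hf hhess
  have hC : 0 ≤ C := C_nonneg htay hm hlower hn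
  set γ := stdGaussian n with hγ
  set r := Real.exp (-t) with hr
  set σ := Real.sqrt (1 - Real.exp (-2 * t)) with hσ
  have hr0 : 0 < r := Real.exp_pos _
  have hσ0 : 0 ≤ σ := Real.sqrt_nonneg _
  have hr2 : r ^ 2 = Real.exp (-2 * t) := by
    rw [hr, sq, ← Real.exp_add]; ring_nf
  have hφ : ∀ x, ouSemigroup n t f x = ∫ z, f (r • x + σ • z) ∂γ := fun _ => rfl
  have hfc : Continuous f := hf.continuous
  have hgc : Continuous (gradient f) := by
    have h1 : Continuous (fderiv ℝ f) := hf.continuous_fderiv two_ne_zero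
    exact (InnerProductSpace.toDual ℝ _).symm.continuous.comp h1
  set B := ‖gradient f 0‖ with hB
  have hB0 : 0 ≤ B := norm_nonneg _
  have hquadf : ∀ p : EuclideanSpace ℝ (Fin n), f p ≤ f 0 + B * ‖p‖ + C * ‖p‖ ^ 2 / 2 := by
    intro p
    have h1 := htay 0 p
    rw [zero_add] at h1
    have h2 : ⟪gradient f 0, p⟫ ≤ B * ‖p‖ := real_inner_le_norm _ _
    linarith
  -- bound: for y fixed, f (y + σ • z) ≤ a y + b * ‖z‖^2 with nonneg a's implicitly
  have hkey : ∀ (y : EuclideanSpace ℝ (Fin n)) (z : EuclideanSpace ℝ (Fin n)),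
      f (y + σ • z) ≤ (f 0 + B * (‖y‖ + σ) + C * ‖y‖ ^ 2) + (B * σ + C * σ ^ 2) * ‖z‖ ^ 2 := by
    intro y z
    have h1 := hquadf (y + σ • z)
    have h2 : ‖y + σ • z‖ ≤ ‖y‖ + σ * ‖z‖ := by
      calc ‖y + σ • z‖ ≤ ‖y‖ + ‖σ • z‖ := norm_add_le _ _
        _ = ‖y‖ + σ * ‖z‖ := by rw [norm_smul, Real.norm_eq_abs, abs_of_nonneg hσ0]
    have h3 : ‖z‖ ≤ 1 + ‖z‖ ^ 2 := by nlinarith [norm_nonneg z, sq_nonneg (‖z‖ - 1)]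
    have h4 : ‖y + σ • z‖ ^ 2 ≤ 2 * ‖y‖ ^ 2 + 2 * σ ^ 2 * ‖z‖ ^ 2 := by
      nlinarith [norm_nonneg (y + σ • z), norm_nonneg y, norm_nonneg z, sq_nonneg (‖y‖ - σ * ‖z‖)]
    have h5 : B * ‖y + σ • z‖ ≤ B * ‖y‖ + B * σ * (1 + ‖z‖ ^ 2) := by
      have h6 : σ * ‖z‖ ≤ σ * (1 + ‖z‖ ^ 2) := mul_le_mul_of_nonneg_left h3 hσ0
      have h7 : B * ‖y + σ • z‖ ≤ B * (‖y‖ + σ * ‖z‖) := mul_le_mul_of_nonneg_left h2 hB0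
      nlinarith [mul_le_mul_of_nonneg_left h6 hB0]
    nlinarith [mul_le_mul_of_nonneg_left h4 (by positivity : (0:ℝ) ≤ C / 2)]
  have hint1 : ∀ y : EuclideanSpace ℝ (Fin n),
      Integrable (fun z => f (y + σ • z)) γ := by
    intro y
    refine integrable_of_quad_bound (hfc.comp (continuous_const.add
        (continuous_const_smul σ)))
      (f 0 + B * (‖y‖ + σ) + C * ‖y‖ ^ 2) (B * σ + C * σ ^ 2) (fun z => ?_)
    rw [abs_of_pos (lt_of_lt_of_le hm (hlower _))]
    exact hkey y z
  have hgb := grad_bound htay hm hlower hC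
  have hint2 : ∀ (y u : EuclideanSpace ℝ (Fin n)),
      Integrable (fun z => ⟪gradient f (y + σ • z), u⟫) γ := by
    intro y u
    refine integrable_of_quad_bound
      ((hgc.comp (continuous_const.add (continuous_const_smul σ))).inner
        continuous_const)
      ((f 0 + B * (‖y‖ + σ) + C * ‖y‖ ^ 2 - m + C / 2) * ‖u‖)
      ((B * σ + C * σ ^ 2) * ‖u‖) (fun z => ?_)
    have h1 : |⟪gradient f (y + σ • z), u⟫| ≤ ‖gradient f (y + σ • z)‖ * ‖u‖ :=
      abs_real_inner_le_norm _ _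
    have h2 := hgb (y + σ • z)
    have h3 := hkey y z
    calc |⟪gradient f (y + σ • z), u⟫| ≤ ‖gradient f (y + σ • z)‖ * ‖u‖ := h1
      _ ≤ (f (y + σ • z) - m + C / 2) * ‖u‖ := mul_le_mul_of_nonneg_right h2 (norm_nonneg u)
      _ ≤ ((f 0 + B * (‖y‖ + σ) + C * ‖y‖ ^ 2) + (B * σ + C * σ ^ 2) * ‖z‖ ^ 2 - m + C / 2) * ‖u‖ := by
          apply mul_le_mul_of_nonneg_right _ (norm_nonneg u)
          linarith
      _ = (f 0 + B * (‖y‖ + σ) + C * ‖y‖ ^ 2 - m + C / 2) * ‖u‖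
            + (B * σ + C * σ ^ 2) * ‖u‖ * ‖z‖ ^ 2 := by ring
  -- lower bound for the semigroup
  have hφm : ∀ x, m ≤ ouSemigroup n t f x := by
    intro x
    rw [hφ]
    have : m = ∫ _z, m ∂γ := by
      rw [integral_const, probReal_univ]; simp
    rw [this]
    exact integral_mono (integrable_const m) (hint1 (r • x)) (fun z => hlower _)
  set φ := ouSemigroup n t f with hφdef
  have hφpos : ∀ x, (0:ℝ) < φ x := fun x => lt_of_lt_of_le hm (hφm x)
  set K := C * Real.exp (-2 * t) with hK
  have hK0 : 0 ≤ K := by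
    rw [hK]; positivity
  set L : EuclideanSpace ℝ (Fin n) → EuclideanSpace ℝ (Fin n) → ℝ :=
    fun a u => ∫ z, ⟪gradient f (r • a + σ • z), r • u⟫ ∂γ with hL
  -- semigroup subgradient inequality
  have hφsub : ∀ a x, φ x ≤ φ a + L a (x - a) + K * ‖x - a‖ ^ 2 / 2 := by
    intro a x
    have point : ∀ z, f (r • x + σ • z) ≤ f (r • a + σ • z)
        + ⟪gradient f (r • a + σ • z), r • (x - a)⟫ + K * ‖x - a‖ ^ 2 / 2 := by
      intro z
      have h1 := htay (r • a + σ • z) (r • (x - a))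
      have heq : r • a + σ • z + r • (x - a) = r • x + σ • z := by
        module
      rw [heq] at h1
      have hn2 : C * ‖r • (x - a)‖ ^ 2 / 2 = K * ‖x - a‖ ^ 2 / 2 := by
        rw [norm_smul, Real.norm_eq_abs, abs_of_pos hr0, mul_pow, hr2, hK]; ring
      rw [hn2] at h1
      exact h1
    have hRint : Integrable (fun z => f (r • a + σ • z)
        + ⟪gradient f (r • a + σ • z), r • (x - a)⟫ + K * ‖x - a‖ ^ 2 / 2) γ :=
      ((hint1 (r • a)).add (hint2 (r • a) (r • (x - a)))).add (integrable_const _)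
    have h2 := integral_mono (hint1 (r • x)) hRint point
    rw [hφ x, hφ a]
    calc (∫ z, f (r • x + σ • z) ∂γ) ≤ ∫ z, (f (r • a + σ • z)
          + ⟪gradient f (r • a + σ • z), r • (x - a)⟫ + K * ‖x - a‖ ^ 2 / 2) ∂γ := h2
      _ = (∫ z, f (r • a + σ • z) ∂γ) + L a (x - a) + K * ‖x - a‖ ^ 2 / 2 := by
          have hi12 : Integrable (fun z => f (r • a + σ • z)
              + ⟪gradient f (r • a + σ • z), r • (x - a)⟫) γ :=
            (hint1 (r • a)).add (hint2 (r • a) (r • (x - a)))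
          rw [integral_add hi12 (integrable_const _),
            integral_add (hint1 (r • a)) (hint2 (r • a) (r • (x - a))), integral_const,
            probReal_univ]
          simp [hL]
  -- log subgradient inequality
  have hsub : ∀ a x, Real.log (φ x) - (K / m) * ‖x‖ ^ 2 / 2
      ≤ (Real.log (φ a) - (K / m) * ‖a‖ ^ 2 / 2) + L a (x - a) / φ a
        - (K / m) * ⟪a, x - a⟫ := by
    intro a x
    set S := φ a + L a (x - a) + K * ‖x - a‖ ^ 2 / 2 with hS
    have hS0 : 0 < S := lt_of_lt_of_le (hφpos x) (hφsub a x)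
    have h1 : Real.log (φ x) ≤ Real.log S := Real.log_le_log (hφpos x) (hφsub a x)
    have h2 : Real.log S - Real.log (φ a) ≤ S / φ a - 1 := by
      rw [← Real.log_div (ne_of_gt hS0) (ne_of_gt (hφpos a))]
      exact Real.log_le_sub_one_of_pos (div_pos hS0 (hφpos a))
    have h3 : S / φ a - 1 = L a (x - a) / φ a + (K * ‖x - a‖ ^ 2 / 2) / φ a := by
      rw [hS]
      field_simp [(hφpos a).ne']
      ring
    have h4 : (K * ‖x - a‖ ^ 2 / 2) / φ a ≤ (K * ‖x - a‖ ^ 2 / 2) / m :=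
      div_le_div_of_nonneg_left (by positivity) hm (hφm a)
    have h5 : Real.log (φ x) ≤ Real.log (φ a) + L a (x - a) / φ a
        + (K / m) * ‖x - a‖ ^ 2 / 2 := by
      have : (K * ‖x - a‖ ^ 2 / 2) / m = (K / m) * ‖x - a‖ ^ 2 / 2 := by ring
      rw [← this]
      linarith
    have hexp : ‖x - a‖ ^ 2 = ‖x‖ ^ 2 - 2 * ⟪x, a⟫ + ‖a‖ ^ 2 := norm_sub_sq_real x a
    have hinner : ⟪a, x - a⟫ = ⟪x, a⟫ - ‖a‖ ^ 2 := by
      rw [inner_sub_right, real_inner_self_eq_norm_sq, real_inner_comm]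
    have hKm : 0 ≤ K / m := div_nonneg hK0 hm.le
    rw [hexp] at h5
    rw [hinner]
    nlinarith [h5]
  -- conclusion
  refine ⟨convex_univ, fun x _ y _ α β hα hβ hαβ => ?_⟩
  set p := α • x + β • y with hp
  have hx := hsub p x
  have hy := hsub p y
  have hzero : α • (x - p) + β • (y - p) = (0 : EuclideanSpace ℝ (Fin n)) := by
    have h1 : α • (x - p) + β • (y - p) = α • x + β • y - (α + β) • p := by module
    rw [h1, hαβ, one_smul, hp, sub_self]
  have hA : α * L p (x - p) + β * L p (y - p) = 0 := by
    rw [hL]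
    simp only
    rw [← integral_const_mul, ← integral_const_mul,
      ← integral_add ((hint2 (r • p) (r • (x - p))).const_mul α)
        ((hint2 (r • p) (r • (y - p))).const_mul β)]
    have : ∀ z, α * ⟪gradient f (r • p + σ • z), r • (x - p)⟫
        + β * ⟪gradient f (r • p + σ • z), r • (y - p)⟫ = 0 := by
      intro z
      rw [← real_inner_smul_right, ← real_inner_smul_right, ← inner_add_right]
      rw [show α • (r • (x - p)) + β • (r • (y - p))
          = r • (α • (x - p) + β • (y - p)) from by
        rw [smul_add, smul_comm α r, smul_comm β r]]
      rw [hzero]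
      simp
    simp only [this, integral_zero]
  have hB : α * ⟪p, x - p⟫ + β * ⟪p, y - p⟫ = 0 := by
    rw [← real_inner_smul_right, ← real_inner_smul_right, ← inner_add_right, hzero]
    simp
  have hdiv : α * (L p (x - p) / φ p) + β * (L p (y - p) / φ p) = 0 := by
    rw [show α * (L p (x - p) / φ p) + β * (L p (y - p) / φ p)
        = (α * L p (x - p) + β * L p (y - p)) / φ p from by ring, hA]
    simp
  have hθx : Real.log (φ x) - (K / m) * ‖x‖ ^ 2 / 2
      ≤ (Real.log (φ p) - (K / m) * ‖p‖ ^ 2 / 2) + L p (x - p) / φ p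
        - (K / m) * ⟪p, x - p⟫ := hx
  simp only [smul_eq_mul]
  have hmulx := mul_le_mul_of_nonneg_left hx hα
  have hmuly := mul_le_mul_of_nonneg_left hy hβ
  have hsum : α * (Real.log (φ x) - (K / m) * ‖x‖ ^ 2 / 2)
      + β * (Real.log (φ y) - (K / m) * ‖y‖ ^ 2 / 2)
      ≤ (α + β) * (Real.log (φ p) - (K / m) * ‖p‖ ^ 2 / 2)
        + (α * (L p (x - p) / φ p) + β * (L p (y - p) / φ p))
        - (K / m) * (α * ⟪p, x - p⟫ + β * ⟪p, y - p⟫) := by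
    nlinarith [hmulx, hmuly]
  rw [hαβ, one_mul, hdiv, hB] at hsum
  have hfinal := hsum
  simp only [mul_zero, add_zero, sub_zero] at hfinal
  calc α * (Real.log (φ x) - C * Real.exp (-2 * t) / m * ‖x‖ ^ 2 / 2)
      + β * (Real.log (φ y) - C * Real.exp (-2 * t) / m * ‖y‖ ^ 2 / 2)
      = α * (Real.log (φ x) - (K / m) * ‖x‖ ^ 2 / 2)
      + β * (Real.log (φ y) - (K / m) * ‖y‖ ^ 2 / 2) := by rw [hK]
    _ ≤ Real.log (φ p) - (K / m) * ‖p‖ ^ 2 / 2 := hfinal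
    _ = Real.log (φ p) - C * Real.exp (-2 * t) / m * ‖p‖ ^ 2 / 2 := by rw [hK]
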